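/- Every (3412,3421)-avoiding permutation π of [n] (n ≥ 2) can be uniquely written either as π₁n with π₁ a (3412,3421)-avoiding permutation of [n−1], or as π₁ ∗ π₂ where π₁ ∈ S_k(3412,3421), π₂ ∈ S_{n−k}(3412,3421), 1 ≤ k ≤ n−1, and π₁ ∗ π₂ = A n B with A = π₁(1)···π₁(k−1) and B obtained from π₂ shifted up by k−1 with its letter (k−1)+1 replaced by π₁(k). -/

import Mathlib

/-- Two lists of naturals are order-isomorphic: same length, and corresponding
entries compare the same way. -/
def OrderIsoList (u v : List ℕ) : Prop :=
  u.length = v.length ∧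
    ∀ i j : ℕ, i < u.length → j < u.length →
      (u.getD i 0 < u.getD j 0 ↔ v.getD i 0 < v.getD j 0)

/-- The list `l` contains the pattern `p`: some subsequence of `l` is
order-isomorphic to `p`. -/
def ContainsL (l p : List ℕ) : Prop :=
  ∃ u : List ℕ, u.Sublist l ∧ OrderIsoList u p

/-- The list `l` avoids the pattern `p`. -/
def AvoidsL (l p : List ℕ) : Prop := ¬ ContainsL l p

/-- The `∗` operation of the paper: for `π₁ ∈ S_k`, `π₂ ∈ S_{n-k}` (as lists, one-based),
`π₁ ∗ π₂ = A n B` where `A = π₁(1)⋯π₁(k-1)` and `B` is `π₂` shifted up by `k-1`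
with its entry `1` replaced by `π₁(k)`. -/
def starPerm (l₁ l₂ : List ℕ) : List ℕ :=
  l₁.dropLast ++ [l₁.length + l₂.length] ++
    l₂.map (fun m => if m = 1 then l₁.getLastD 0 else m + (l₁.length - 1))

/-- Every `(3412,3421)`-avoiding permutation of `[n]` (`n ≥ 2`, written as a list,
one-based) can be uniquely written either as `π₁ n` with `π₁` a
`(3412,3421)`-avoiding permutation of `[n-1]`, or as `π₁ ∗ π₂` with
`π₁ ∈ S_k(3412,3421)`, `π₂ ∈ S_{n-k}(3412,3421)`, `1 ≤ k ≤ n-1`. -/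
lemma orderIso_trans {u v w : List ℕ} (h1 : OrderIsoList u v) (h2 : OrderIsoList v w) :
    OrderIsoList u w := by
  obtain ⟨e1, h1⟩ := h1; obtain ⟨e2, h2⟩ := h2
  refine ⟨e1.trans e2, fun i j hi hj => ?_⟩
  rw [h1 i j hi hj, h2 i j (e1 ▸ hi) (e1 ▸ hj)]

lemma iso3412 {a b c d : ℕ} (h1 : c < d) (h2 : d < a) (h3 : a < b) :
    OrderIsoList [a, b, c, d] [3, 4, 1, 2] := by
  refine ⟨rfl, fun i j hi hj => ?_⟩
  simp only [List.length_cons, List.length_nil] at hi hj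
  interval_cases i <;> interval_cases j <;> simp [List.getD] <;> omega

lemma iso3421 {a b c d : ℕ} (h1 : d < c) (h2 : c < a) (h3 : a < b) :
    OrderIsoList [a, b, c, d] [3, 4, 2, 1] := by
  refine ⟨rfl, fun i j hi hj => ?_⟩
  simp only [List.length_cons, List.length_nil] at hi hj
  interval_cases i <;> interval_cases j <;> simp [List.getD] <;> omega

lemma avoids_sublist {l s p : List ℕ} (h : AvoidsL l p) (hs : s.Sublist l) : AvoidsL s p := by
  rintro ⟨u, hu, hiso⟩
  exact h ⟨u, hu.trans hs, hiso⟩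

lemma orderIso_map {v : List ℕ} {f : ℕ → ℕ}
    (hf : ∀ a ∈ v, ∀ b ∈ v, (a < b ↔ f a < f b)) :
    OrderIsoList (v.map f) v := by
  refine ⟨List.length_map _, fun i j hi hj => ?_⟩
  rw [List.length_map] at hi hj
  rw [List.getD_eq_getElem _ _ (by simpa using hi), List.getD_eq_getElem _ _ (by simpa using hj),
    List.getD_eq_getElem _ _ hi, List.getD_eq_getElem _ _ hj, List.getElem_map, List.getElem_map]
  exact (hf _ (v.getElem_mem hi) _ (v.getElem_mem hj)).symm

lemma avoids_map {L : List ℕ} {f : ℕ → ℕ}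
    (hf : ∀ a ∈ L, ∀ b ∈ L, (a < b ↔ f a < f b)) {p : List ℕ}
    (h : AvoidsL L p) : AvoidsL (L.map f) p := by
  rintro ⟨u, hu, hiso⟩
  obtain ⟨v, hv, rfl⟩ := List.sublist_map_iff.mp hu
  refine h ⟨v, hv, orderIso_trans ?_ hiso⟩
  have hf' : ∀ a ∈ v, ∀ b ∈ v, (a < b ↔ f a < f b) :=
    fun a ha b hb => hf a (hv.mem ha) b (hv.mem hb)
  obtain ⟨e, hiff⟩ := orderIso_map hf'
  exact ⟨e.symm, fun i j hi hj => (hiff i j (e ▸ hi) (e ▸ hj)).symm⟩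

lemma append_cons_inj {a : ℕ} {P Q P' Q' : List ℕ}
    (h : P ++ a :: Q = P' ++ a :: Q') (hP : a ∉ P) (hP' : a ∉ P') : P = P' ∧ Q = Q' := by
  induction P generalizing P' with
  | nil =>
    cases P' with
    | nil => simpa using h
    | cons x t => simp at h; exact absurd (h.1 ▸ (List.mem_cons_self : x ∈ x :: t)) (h.1 ▸ hP')
  | cons x t ih =>
    cases P' with
    | nil =>
      simp at h
      exact absurd (h.1 ▸ (List.mem_cons_self : x ∈ x :: t)) (h.1 ▸ hP)
    | cons y s =>
      simp at h hP hP' ⊢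
      obtain ⟨rfl, h2⟩ := h
      exact ⟨⟨rfl, (ih h2 hP.2 hP'.2).1⟩, (ih h2 hP.2 hP'.2).2⟩

lemma range'_map_sub (c s len : ℕ) (hc : c ≤ s) :
    (List.range' s len).map (fun x => x - c) = List.range' (s - c) len := by
  induction len generalizing s with
  | zero => simp
  | succ m ih =>
    rw [List.range'_succ, List.range'_succ, List.map_cons, ih (s+1) (by omega),
      show s + 1 - c = s - c + 1 by omega]

lemma range'_filter_le (n k : ℕ) (hk : k ≤ n) :
    (List.range' 1 n).filter (fun b => b ≤ k) = List.range' 1 k := by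
  have hsplit : List.range' 1 n = List.range' 1 k ++ List.range' (1 + k) (n - k) := by
    have h := (List.range'_append (s := 1) (m := k) (n := n - k) (step := 1)).symm
    simp only [one_mul] at h
    rwa [show k + (n - k) = n by omega] at h
  rw [hsplit, List.filter_append,
    List.filter_eq_self.mpr (fun a ha => by simp at ha ⊢; omega),
    List.filter_eq_nil_iff.mpr (fun a ha => by simp [List.mem_range'_1] at ha ⊢; omega),
    List.append_nil]

lemma range'_filter_gt (n k : ℕ) (hk : k ≤ n) :
    (List.range' 1 n).filter (fun b => k < b) = List.range' (1 + k) (n - k) := by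
  have hsplit : List.range' 1 n = List.range' 1 k ++ List.range' (1 + k) (n - k) := by
    have h := (List.range'_append (s := 1) (m := k) (n := n - k) (step := 1)).symm
    simp only [one_mul] at h
    rwa [show k + (n - k) = n by omega] at h
  rw [hsplit, List.filter_append,
    List.filter_eq_nil_iff.mpr (fun a ha => by simp [List.mem_range'_1] at ha ⊢; omega),
    List.filter_eq_self.mpr (fun a ha => by simp [List.mem_range'_1] at ha ⊢; omega),
    List.nil_append]

lemma starPerm_facts (n k : ℕ) (l₁ l₂ : List ℕ) (hk1 : 1 ≤ k) (hk2 : k ≤ n - 1) (hn : 2 ≤ n)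
    (h1 : l₁.Perm (List.range' 1 k)) (h2 : l₂.Perm (List.range' 1 (n - k))) :
    starPerm l₁ l₂ = l₁.dropLast ++ n ::
        l₂.map (fun m => if m = 1 then l₁.getLastD 0 else m + (l₁.length - 1)) ∧
    n ∉ l₁.dropLast ∧
    l₂.map (fun m => if m = 1 then l₁.getLastD 0 else m + (l₁.length - 1)) ≠ [] ∧
    l₁.getLastD 0 ∈ l₁ ∧ l₁.length = k ∧
    l₁ = l₁.dropLast ++ [l₁.getLastD 0] ∧ (∀ x ∈ l₁, 1 ≤ x ∧ x ≤ k) := by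
  have hlen1 : l₁.length = k := by simpa using h1.length_eq
  have hlen2 : l₂.length = n - k := by simpa using h2.length_eq
  have hne : l₁ ≠ [] := List.ne_nil_of_length_pos (by omega)
  have hlast : l₁.dropLast ++ [l₁.getLast hne] = l₁ := List.dropLast_append_getLast hne
  have hD : l₁.getLastD 0 = l₁.getLast hne := by
    conv_lhs => rw [← hlast]
    rw [List.getLastD_concat]
  have hmem1 : ∀ x ∈ l₁, 1 ≤ x ∧ x ≤ k := by
    intro x hx
    have := List.mem_range'_1.mp (h1.mem_iff.mp hx); omega
  refine ⟨?_, ?_, ?_, ?_, hlen1, by rw [hD]; exact hlast.symm, hmem1⟩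
  · unfold starPerm
    rw [List.append_assoc, List.singleton_append,
      show l₁.length + l₂.length = n by omega]
  · intro hm
    have := hmem1 n ((List.dropLast_sublist l₁).mem hm)
    omega
  · apply List.ne_nil_of_length_pos
    rw [List.length_map]; omega
  · rw [hD]; exact List.getLast_mem hne

theorem star_decomposition (n : ℕ) (hn : 2 ≤ n) (l : List ℕ)
    (hl : l.Perm (List.range' 1 n))
    (ha1 : AvoidsL l [3, 4, 1, 2]) (ha2 : AvoidsL l [3, 4, 2, 1]) :
    ∃! d : List ℕ ⊕ ℕ × List ℕ × List ℕ,
      match d with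
      | .inl l₁ =>
          l₁.Perm (List.range' 1 (n - 1)) ∧
          AvoidsL l₁ [3, 4, 1, 2] ∧ AvoidsL l₁ [3, 4, 2, 1] ∧
          l = l₁ ++ [n]
      | .inr (k, l₁, l₂) =>
          1 ≤ k ∧ k ≤ n - 1 ∧
          l₁.Perm (List.range' 1 k) ∧ l₂.Perm (List.range' 1 (n - k)) ∧
          AvoidsL l₁ [3, 4, 1, 2] ∧ AvoidsL l₁ [3, 4, 2, 1] ∧
          AvoidsL l₂ [3, 4, 1, 2] ∧ AvoidsL l₂ [3, 4, 2, 1] ∧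
          l = starPerm l₁ l₂ := by
  classical
  have hlen : l.length = n := by simpa using hl.length_eq
  have hmem : ∀ x ∈ l, 1 ≤ x ∧ x ≤ n := by
    intro x hx
    have := List.mem_range'_1.mp (hl.mem_iff.mp hx); omega
  have hnd : l.Nodup := hl.nodup_iff.mpr (List.nodup_range' (s := 1) (n := n))
  have hnl : n ∈ l := hl.mem_iff.mpr (List.mem_range'_1.mpr ⟨by omega, by omega⟩)
  obtain ⟨P, Q, hPQ⟩ := List.append_of_mem hnl
  subst hPQ
  obtain ⟨hndP, hndQ', hdisj⟩ := List.nodup_append'.mp hnd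
  have hnQ : n ∉ Q := (List.nodup_cons.mp hndQ').1
  have hndQ : Q.Nodup := (List.nodup_cons.mp hndQ').2
  have hnP : n ∉ P := fun h => hdisj h List.mem_cons_self
  have hPQlen : P.length + Q.length + 1 = n := by
    simp only [List.length_append, List.length_cons] at hlen; omega
  by_cases hQ : Q = []
  · -- l ends with n
    subst hQ
    have hrnsplit : List.range' 1 n = List.range' 1 (n-1) ++ [n] := by
      have h2 := List.range'_append (s := 1) (m := n-1) (n := 1) (step := 1)
      simp only [one_mul, List.range'_one] at h2
      rw [show (1:ℕ) + (n-1) = n by omega, show n - 1 + 1 = n by omega] at h2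
      exact h2.symm
    have hP : P.Perm (List.range' 1 (n-1)) := by
      have h := hl
      rw [hrnsplit] at h
      exact (List.perm_append_right_iff [n]).mp h
    have hPsub : P.Sublist (P ++ [n]) := List.sublist_append_left P [n]
    refine ⟨Sum.inl P, ⟨hP, avoids_sublist ha1 hPsub, avoids_sublist ha2 hPsub, rfl⟩, ?_⟩
    rintro (l₁' | ⟨k', l₁', l₂'⟩) hd
    · obtain ⟨hp', -, -, heq⟩ := hd
      have hn' : n ∉ l₁' := fun h => by
        have := List.mem_range'_1.mp (hp'.mem_iff.mp h); omega
      obtain ⟨hPe, -⟩ := append_cons_inj heq hnP hn'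
      rw [hPe]
    · obtain ⟨hk1, hk2, h1, h2, -, -, -, -, heq⟩ := hd
      obtain ⟨hsp, hnd1, hMne, -⟩ := starPerm_facts n k' l₁' l₂' hk1 hk2 hn h1 h2
      rw [hsp] at heq
      obtain ⟨-, hQe⟩ := append_cons_inj heq hnP hnd1
      exact absurd hQe.symm hMne
  · -- n is not last
    obtain ⟨k, hkdef⟩ : ∃ k, k = P.length + 1 := ⟨_, rfl⟩
    have hQlen : 1 ≤ Q.length := List.length_pos_iff.mpr hQ
    have hk1 : 1 ≤ k := by omega
    have hk2 : k ≤ n - 1 := by omega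
    -- the filtered lists
    have hfilter_eq : (P ++ n :: Q).filter (fun b => b ≤ k)
        = P.filter (fun b => b ≤ k) ++ Q.filter (fun b => b ≤ k) := by
      rw [List.filter_append, List.filter_cons_of_neg (by simp; omega)]
    have hfperm : ((P ++ n :: Q).filter (fun b => b ≤ k)).Perm (List.range' 1 k) := by
      refine (hl.filter _).trans ?_
      rw [range'_filter_le n k (by omega)]
    have hflen : (P.filter (fun b => b ≤ k)).length + (Q.filter (fun b => b ≤ k)).length = k := by
      have h := hfperm.length_eq
      rw [hfilter_eq] at h
      simpa using h
    have hQf1 : (Q.filter (fun b => b ≤ k)).length = 1 := by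
      have hge : 1 ≤ (Q.filter (fun b => b ≤ k)).length := by
        have := List.length_filter_le (fun b => decide (b ≤ k)) P
        omega
      by_contra hne1
      have hge2 : 2 ≤ (Q.filter (fun b => b ≤ k)).length := by omega
      obtain ⟨b, c, t, hbct⟩ : ∃ b c t, Q.filter (fun b => b ≤ k) = b :: c :: t := by
        rcases hQf : Q.filter (fun b => b ≤ k) with _ | ⟨b, _ | ⟨c, t⟩⟩
        · rw [hQf] at hge2; simp at hge2
        · rw [hQf] at hge2; simp at hge2
        · exact ⟨_, _, _, rfl⟩
      obtain ⟨a, haP, hak⟩ : ∃ a ∈ P, k < a := by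
        by_contra hno
        push_neg at hno
        have hPf : P.filter (fun b => b ≤ k) = P :=
          List.filter_eq_self.mpr (fun x hx => by simpa using hno x hx)
        rw [hPf] at hflen
        omega
      have hb : b ∈ Q ∧ b ≤ k := by
        have : b ∈ Q.filter (fun b => b ≤ k) := by rw [hbct]; simp
        have h2 := List.mem_filter.mp this
        simpa using h2
      have hc : c ∈ Q ∧ c ≤ k := by
        have : c ∈ Q.filter (fun b => b ≤ k) := by rw [hbct]; simp
        have h2 := List.mem_filter.mp this
        simpa using h2
      have hbc : b ≠ c := by
        have hndf : (Q.filter (fun b => b ≤ k)).Nodup := hndQ.filter _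
        rw [hbct, List.nodup_cons] at hndf
        exact fun h => hndf.1 (h ▸ (List.mem_cons_self : c ∈ c :: t))
      have hsub : [a, n, b, c].Sublist (P ++ n :: Q) := by
        have hh1 : [a].Sublist P := List.singleton_sublist.mpr haP
        have hh2 : [b, c].Sublist (Q.filter (fun b => b ≤ k)) := by
          rw [hbct]
          exact ((List.nil_sublist t).cons₂ c).cons₂ b
        have hh3 : [b, c].Sublist Q := hh2.trans (List.filter_sublist (l := Q))
        exact hh1.append (hh3.cons₂ n)
      have han : a < n := by
        have := hmem a (List.mem_append_left _ haP)
        rcases Nat.lt_or_ge a n with h | h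
        · exact h
        · exact absurd (by omega : a = n) (fun he => hnP (he ▸ haP))
      rcases Nat.lt_or_ge b c with hlt | hge'
      · exact ha1 ⟨[a, n, b, c], hsub, iso3412 hlt (by omega) han⟩
      · have hlt : c < b := by omega
        exact ha2 ⟨[a, n, b, c], hsub, iso3421 hlt (by omega) han⟩
    obtain ⟨m, hQfE⟩ : ∃ m, Q.filter (fun b => b ≤ k) = [m] := by
      rcases hQf : Q.filter (fun b => b ≤ k) with _ | ⟨m, _ | _⟩
      · rw [hQf] at hQf1; simp at hQf1
      · exact ⟨m, rfl⟩
      · rw [hQf] at hQf1; simp at hQf1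
    have hmQ : m ∈ Q ∧ m ≤ k := by
      have : m ∈ Q.filter (fun b => b ≤ k) := by rw [hQfE]; simp
      have h2 := List.mem_filter.mp this
      simpa using h2
    have huniq : ∀ x ∈ Q, x ≤ k → x = m := by
      intro x hx hxk
      have : x ∈ Q.filter (fun b => b ≤ k) := List.mem_filter.mpr ⟨hx, by simpa⟩
      rw [hQfE] at this
      simpa using this
    have hkQ : ∀ x ∈ Q, x ≠ m → k < x := by
      intro x hx hxm
      by_contra h
      exact hxm (huniq x hx (by omega))
    have hPfilter : P.filter (fun b => b ≤ k) = P := by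
      apply (List.filter_sublist (l := P)).eq_of_length
      have := hQfE ▸ hQf1
      omega
    have hPk : ∀ x ∈ P, x ≤ k := by
      intro x hx
      have := List.filter_eq_self.mp hPfilter x hx
      simpa using this
    set f : ℕ → ℕ := fun b => if b = m then 1 else b - (k-1) with hfdef
    have hfm : f m = 1 := if_pos rfl
    have hfx : ∀ x, x ≠ m → f x = x - (k-1) := fun x hx => if_neg hx
    -- perm of l₁
    have hl₁perm : (P ++ [m]).Perm (List.range' 1 k) := by
      have h := hfperm
      rw [hfilter_eq, hPfilter, hQfE] at h
      exact h
    -- perm of l₂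
    have hQsplit : Q.Perm (m :: Q.filter (fun b => k < b)) := by
      have h := (List.filter_append_perm (fun b => b ≤ k) Q).symm
      rw [hQfE] at h
      have hco : Q.filter (fun x => !decide (x ≤ k)) = Q.filter (fun b => k < b) :=
        List.filter_congr (fun x _ => by rw [← decide_not, decide_eq_decide]; omega)
      rw [hco] at h
      simpa using h
    have hlf : (P ++ n :: Q).filter (fun b => k < b) = n :: Q.filter (fun b => k < b) := by
      rw [List.filter_append,
        List.filter_eq_nil_iff.mpr (fun x hx => by simp; exact hPk x hx),
        List.filter_cons_of_pos (by simp; omega), List.nil_append]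
    have hgt : (n :: Q.filter (fun b => k < b)).Perm (List.range' (1+k) (n-k)) := by
      rw [← hlf]
      refine (hl.filter _).trans ?_
      rw [range'_filter_gt n k (by omega)]
    have hrsplit : List.range' (1+k) (n-k) = List.range' (1+k) (n-k-1) ++ [n] := by
      have h2 := List.range'_append (s := 1+k) (m := n-k-1) (n := 1) (step := 1)
      simp only [one_mul, List.range'_one] at h2
      rw [show 1+k+(n-k-1) = n by omega, show n-k-1+1 = n-k by omega] at h2
      exact h2.symm
    have hQgt : (Q.filter (fun b => k < b)).Perm (List.range' (1+k) (n-k-1)) := by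
      have h3 : (n :: Q.filter (fun b => k < b)).Perm (n :: List.range' (1+k) (n-k-1)) := by
        refine hgt.trans ?_
        rw [hrsplit]
        exact List.perm_append_singleton n _
      exact h3.cons_inv
    have hmaprange : (List.range' (1+k) (n-k-1)).map f = List.range' 2 (n-k-1) := by
      have hc : ∀ x ∈ List.range' (1+k) (n-k-1), f x = x - (k-1) := by
        intro x hx
        have := List.mem_range'_1.mp hx
        exact hfx x (by omega)
      rw [List.map_congr_left hc, range'_map_sub (k-1) (1+k) _ (by omega),
        show 1+k-(k-1) = 2 by omega]
    have hl₂perm : (Q.map f).Perm (List.range' 1 (n - k)) := by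
      have h4 := hQsplit.map f
      rw [List.map_cons, hfm] at h4
      refine h4.trans ?_
      have h5 := (hQgt.map f).trans (by rw [hmaprange])
      have h6 := h5.cons 1
      refine h6.trans ?_
      rw [show n-k = n-k-1+1 by omega, List.range'_succ, show (1:ℕ)+1 = 2 from rfl]
      rw [show n-k-1+1-1 = n-k-1 by omega]
    -- avoidance
    have hl₁sub : (P ++ [m]).Sublist (P ++ n :: Q) :=
      List.Sublist.append_left ((List.singleton_sublist.mpr hmQ.1).cons n) P
    have hQsub : Q.Sublist (P ++ n :: Q) :=
      (List.sublist_cons_self n Q).trans (List.sublist_append_right P (n :: Q))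
    have hfmono : ∀ a ∈ Q, ∀ b ∈ Q, (a < b ↔ f a < f b) := by
      intro a ha b hb
      by_cases ham : a = m <;> by_cases hbm : b = m
      · subst ham; subst hbm; simp
      · have hkb := hkQ b hb hbm
        subst ham
        rw [hfm, hfx b hbm]
        omega
      · have hka := hkQ a ha ham
        subst hbm
        rw [hfm, hfx a ham]
        omega
      · have hka := hkQ a ha ham
        have hkb := hkQ b hb hbm
        rw [hfx a ham, hfx b hbm]
        omega
    -- starPerm equality
    have hgf : ∀ x ∈ Q,
        ((fun e => if e = 1 then m else e + (k-1)) ∘ f) x = id x := by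
      intro x hx
      simp only [Function.comp_apply, id]
      by_cases hxm : x = m
      · subst hxm; rw [hfm, if_pos rfl]
      · have hkx := hkQ x hx hxm
        rw [hfx x hxm, if_neg (by omega)]
        omega
    have hstar : P ++ n :: Q = starPerm (P ++ [m]) (Q.map f) := by
      have hA : (P ++ [m]).length + (Q.map f).length = n := by
        simp only [List.length_append, List.length_map, List.length_cons, List.length_nil]
        omega
      have hB : (P ++ [m]).length - 1 = k - 1 := by
        simp only [List.length_append, List.length_cons, List.length_nil]
        omega
      symm
      unfold starPerm
      simp only [List.dropLast_concat, List.getLastD_concat, hA, hB, List.map_map]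
      rw [List.map_congr_left hgf, List.map_id]
      simp
    refine ⟨Sum.inr (k, P ++ [m], Q.map f),
      ⟨hk1, hk2, hl₁perm, hl₂perm,
        avoids_sublist ha1 hl₁sub, avoids_sublist ha2 hl₁sub,
        avoids_map hfmono (avoids_sublist ha1 hQsub),
        avoids_map hfmono (avoids_sublist ha2 hQsub), hstar⟩, ?_⟩
    rintro (l₁' | ⟨k', l₁', l₂'⟩) hd
    · obtain ⟨hp', -, -, heq⟩ := hd
      have hn' : n ∉ l₁' := fun h => by
        have := List.mem_range'_1.mp (hp'.mem_iff.mp h); omega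
      obtain ⟨-, hQe⟩ := append_cons_inj heq hnP hn'
      exact absurd hQe hQ
    · obtain ⟨hk1', hk2', h1', h2', -, -, -, -, heq⟩ := hd
      obtain ⟨hsp, hnd1', hMne', hm'mem, hlen1', hl₁'split, hmem1'⟩ :=
        starPerm_facts n k' l₁' l₂' hk1' hk2' hn h1' h2'
      rw [hsp] at heq
      obtain ⟨hPe, hQe⟩ := append_cons_inj heq hnP hnd1'
      have hk'k : k' = k := by
        have hle := congrArg List.length hPe
        rw [List.length_dropLast, hlen1'] at hle
        omega
      have hm'Q : l₁'.getLastD 0 ∈ Q := by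
        have h1mem : (1 : ℕ) ∈ l₂' := h2'.mem_iff.mpr (List.mem_range'_1.mpr ⟨le_refl 1, by omega⟩)
        rw [hQe]
        exact List.mem_map.mpr ⟨1, h1mem, by simp⟩
      have hm'm : l₁'.getLastD 0 = m := by
        apply huniq _ hm'Q
        have := hmem1' _ hm'mem
        omega
      have hl₁'eq : l₁' = P ++ [m] := by
        rw [hl₁'split, ← hPe, hm'm]
      have hl₂'eq : l₂' = Q.map f := by
        have hcomp : ∀ e ∈ l₂',
            (f ∘ (fun e => if e = 1 then l₁'.getLastD 0 else e + (l₁'.length - 1))) e = id e := by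
          intro e he
          have hbd := List.mem_range'_1.mp (h2'.mem_iff.mp he)
          simp only [Function.comp_apply, id]
          by_cases he1 : e = 1
          · subst he1
            rw [if_pos rfl, hm'm, hfm]
          · rw [if_neg he1, hlen1', hk'k, hfx _ (by omega)]
            omega
        rw [hQe, List.map_map, List.map_congr_left hcomp, List.map_id]
      rw [hk'k, hl₁'eq, hl₂'eq]
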